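/- Let I be a finite set and N = {(a, b) ∈ ℕ^I × ℕ^I : ∑_i a_i = ∑_i b_i}. Identify (i, j) ∈ I × I with (e_i, e_j) ∈ N where (e_i) is the standard basis. Fix a total order on I and give I × I the product order. Then for every (a, b) ∈ N there exists a totally ordered subset σ ⊆ I × I such that (a, b) lies in the submonoid N_σ of N generated by {(e_i, e_j) : (i, j) ∈ σ}. -/

import Mathlib

private lemma aux_cones (I : Type*) [Fintype I] [LinearOrder I] [DecidableEq I] :
    ∀ (n : ℕ) (a b : I → ℕ), ∑ i, a i = n → ∑ i, b i = n →
    ∃ σ : Set (I × I),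
      (∀ p ∈ σ, ∀ q ∈ σ, p ≤ q ∨ q ≤ p) ∧
      (∀ p ∈ σ, 0 < a p.1 ∧ 0 < b p.2) ∧
      (a, b) ∈ AddSubmonoid.closure
        ((fun p : I × I => ((Pi.single p.1 1 : I → ℕ), (Pi.single p.2 1 : I → ℕ))) '' σ) := by
  intro n
  induction n with
  | zero =>
    intro a b ha hb
    have ha0 : a = 0 := by
      funext i
      exact Finset.sum_eq_zero_iff.mp ha i (Finset.mem_univ i)
    have hb0 : b = 0 := by
      funext i
      exact Finset.sum_eq_zero_iff.mp hb i (Finset.mem_univ i)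
    refine ⟨∅, by simp, by simp, ?_⟩
    rw [ha0, hb0]
    exact AddSubmonoid.zero_mem _
  | succ n ih =>
    intro a b ha hb
    have hsa : (Finset.univ.filter fun i => 0 < a i).Nonempty := by
      by_contra h
      rw [Finset.not_nonempty_iff_eq_empty, Finset.filter_eq_empty_iff] at h
      have : ∑ i, a i = 0 := Finset.sum_eq_zero fun i hi => by
        have := h hi; omega
      omega
    have hsb : (Finset.univ.filter fun i => 0 < b i).Nonempty := by
      by_contra h
      rw [Finset.not_nonempty_iff_eq_empty, Finset.filter_eq_empty_iff] at h
      have : ∑ i, b i = 0 := Finset.sum_eq_zero fun i hi => by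
        have := h hi; omega
      omega
    set i := (Finset.univ.filter fun i => 0 < a i).min' hsa with hi_def
    set j := (Finset.univ.filter fun i => 0 < b i).min' hsb with hj_def
    have hai : 0 < a i := by
      have := (Finset.univ.filter fun i => 0 < a i).min'_mem hsa
      simpa using this
    have hbj : 0 < b j := by
      have := (Finset.univ.filter fun i => 0 < b i).min'_mem hsb
      simpa using this
    have himin : ∀ k, 0 < a k → i ≤ k := fun k hk =>
      Finset.min'_le _ k (by simpa using hk)
    have hjmin : ∀ k, 0 < b k → j ≤ k := fun k hk =>
      Finset.min'_le _ k (by simpa using hk)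
    set a' : I → ℕ := a - Pi.single i 1 with ha'
    set b' : I → ℕ := b - Pi.single j 1 with hb'
    have haeq : a = Pi.single i 1 + a' := by
      funext k
      by_cases h : k = i
      · subst h; simp [ha', Pi.single_apply]; omega
      · simp [ha', Pi.single_apply, h]
    have hbeq : b = Pi.single j 1 + b' := by
      funext k
      by_cases h : k = j
      · subst h; simp [hb', Pi.single_apply]; omega
      · simp [hb', Pi.single_apply, h]
    have hsa' : ∑ k, a' k = n := by
      have : ∑ k, a k = 1 + ∑ k, a' k := by
        rw [haeq]; simp [Finset.sum_add_distrib]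
      omega
    have hsb' : ∑ k, b' k = n := by
      have : ∑ k, b k = 1 + ∑ k, b' k := by
        rw [hbeq]; simp [Finset.sum_add_distrib]
      omega
    obtain ⟨σ', hchain, hpos, hmem⟩ := ih a' b' hsa' hsb'
    have hposa : ∀ p ∈ σ', 0 < a p.1 ∧ 0 < b p.2 := by
      intro p hp
      obtain ⟨h1, h2⟩ := hpos p hp
      constructor
      · have : a' p.1 ≤ a p.1 := Nat.sub_le _ _
        omega
      · have : b' p.2 ≤ b p.2 := Nat.sub_le _ _
        omega
    have hle : ∀ p ∈ σ', (i, j) ≤ p := by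
      intro p hp
      obtain ⟨h1, h2⟩ := hposa p hp
      exact ⟨himin _ h1, hjmin _ h2⟩
    refine ⟨insert (i, j) σ', ?_, ?_, ?_⟩
    · intro p hp q hq
      rcases hp with hp | hp <;> rcases hq with hq | hq
      · left; rw [hp, hq]
      · left; rw [hp]; exact hle q hq
      · right; rw [hq]; exact hle p hp
      · exact hchain p hp q hq
    · intro p hp
      rcases hp with hp | hp
      · rw [hp]; exact ⟨hai, hbj⟩
      · exact hposa p hp
    · have h1 : ((Pi.single i 1 : I → ℕ), (Pi.single j 1 : I → ℕ)) ∈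
          AddSubmonoid.closure ((fun p : I × I =>
            ((Pi.single p.1 1 : I → ℕ), (Pi.single p.2 1 : I → ℕ))) '' insert (i, j) σ') :=
        AddSubmonoid.subset_closure ⟨(i, j), Set.mem_insert _ _, rfl⟩
      have h2 : (a', b') ∈ AddSubmonoid.closure ((fun p : I × I =>
            ((Pi.single p.1 1 : I → ℕ), (Pi.single p.2 1 : I → ℕ))) '' insert (i, j) σ') :=
        AddSubmonoid.closure_mono (Set.image_mono (Set.subset_insert _ _)) hmem
      have := AddSubmonoid.add_mem _ h1 h2
      rwa [show ((Pi.single i 1 : I → ℕ), (Pi.single j 1 : I → ℕ)) + (a', b') = (a, b) by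
        rw [Prod.mk_add_mk, ← haeq, ← hbeq]] at this

/-- for a finite (totally ordered) set `I` and
`N = {(a,b) ∈ ℕ^I × ℕ^I : ∑ aᵢ = ∑ bᵢ}`, every element of `N` lies in the submonoid
generated by `{(e_i, e_j) : (i,j) ∈ σ}` for some subset `σ ⊆ I × I` that is totally
ordered for the product order. -/
theorem totally_ordered_cones_cover
    (I : Type*) [Fintype I] [LinearOrder I] [DecidableEq I]
    (a b : I → ℕ) (hab : ∑ i, a i = ∑ i, b i) :
    ∃ σ : Set (I × I),
      (∀ p ∈ σ, ∀ q ∈ σ, p ≤ q ∨ q ≤ p) ∧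
      (a, b) ∈ AddSubmonoid.closure
        ((fun p : I × I => ((Pi.single p.1 1 : I → ℕ), (Pi.single p.2 1 : I → ℕ))) '' σ) := by
  obtain ⟨σ, hchain, _, hmem⟩ := aux_cones I (∑ i, a i) a b rfl hab.symm
  exact ⟨σ, hchain, hmem⟩
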